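/- On ℝ³ with the Heisenberg horizontal gradient ∇_H f = (X₁f, X₂f), where X₁f(x) = ∂f/∂x₁ + 2x₂ ∂f/∂x₃ and X₂f(x) = ∂f/∂x₂ − 2x₁ ∂f/∂x₃, let n = (n₁,n₂,n₃) ∈ ℝ³ be a unit vector, d ∈ ℝ, and let Ω⁺ = {x ∈ ℝ³ : x₁n₁ + x₂n₂ + x₃n₃ > d}. Then for every p > 1 and every f ∈ C₀^∞(Ω⁺): ∫_{Ω⁺} |∇_H f(x)|^p dx ≥ ((p−1)/p)^p ∫_{Ω⁺} ( ((n₁ + 2x₂n₃)² + (n₂ − 2x₁n₃)²)^{p/2} / (x₁n₁ + x₂n₂ + x₃n₃ − d)^p ) |f(x)|^p dx. -/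

import Mathlib

open MeasureTheory Real

/-- The Heisenberg vector field `X₁ f = ∂f/∂x₁ + 2x₂ ∂f/∂x₃` on `ℝ³`. -/
noncomputable def X1H (f : (Fin 3 → ℝ) → ℝ) (x : Fin 3 → ℝ) : ℝ :=
  fderiv ℝ f x ![1, 0, 2 * x 1]

/-- The Heisenberg vector field `X₂ f = ∂f/∂x₂ − 2x₁ ∂f/∂x₃` on `ℝ³`. -/
noncomputable def X2H (f : (Fin 3 → ℝ) → ℝ) (x : Fin 3 → ℝ) : ℝ :=
  fderiv ℝ f x ![0, 1, -2 * x 0]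

open Filter

lemma vec1 (c : ℝ) : ![(1:ℝ), 0, c] = ![1,0,0] + c • ![0,0,1] := by
  funext i
  fin_cases i <;> simp

lemma vec2 (c : ℝ) : ![(0:ℝ), 1, c] = ![0,1,0] + c • ![0,0,1] := by
  funext i
  fin_cases i <;> simp

lemma X1H_eq (g : (Fin 3 → ℝ) → ℝ) (x : Fin 3 → ℝ) :
    X1H g x = fderiv ℝ g x ![1,0,0] + 2 * x 1 * fderiv ℝ g x ![0,0,1] := by
  rw [X1H, vec1, map_add, ContinuousLinearMap.map_smul]
  simp

lemma X2H_eq (g : (Fin 3 → ℝ) → ℝ) (x : Fin 3 → ℝ) :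
    X2H g x = fderiv ℝ g x ![0,1,0] + (-2 * x 0) * fderiv ℝ g x ![0,0,1] := by
  rw [X2H, vec2, map_add, ContinuousLinearMap.map_smul]
  simp


lemma contDiff_coord (i : Fin 3) {n : ℕ∞} : ContDiff ℝ n (fun x : Fin 3 → ℝ => x i) :=
  (ContinuousLinearMap.proj (R := ℝ) (φ := fun _ : Fin 3 => ℝ) i).contDiff

lemma hasFDerivAt_coord (i : Fin 3) (x : Fin 3 → ℝ) :
    HasFDerivAt (fun y : Fin 3 → ℝ => y i)
      (ContinuousLinearMap.proj (R := ℝ) (φ := fun _ : Fin 3 => ℝ) i) x :=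
  (ContinuousLinearMap.proj (R := ℝ) (φ := fun _ : Fin 3 => ℝ) i).hasFDerivAt

lemma integrable_fderiv_dir (g : (Fin 3 → ℝ) → ℝ) (hg : ContDiff ℝ 1 g)
    (hc : HasCompactSupport g) (v : Fin 3 → ℝ) :
    Integrable (fun x => fderiv ℝ g x v) := by
  have hfd : Continuous fun x => fderiv ℝ g x v :=
    (ContinuousLinearMap.apply ℝ ℝ v).continuous.comp (hg.continuous_fderiv one_ne_zero)
  apply hfd.integrable_of_hasCompactSupport
  apply HasCompactSupport.intro hc
  intro x hx
  have : fderiv ℝ g x = 0 := by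
    by_contra h
    exact hx (support_fderiv_subset ℝ h)
  simp [this]

-- integral of directional derivative of a C¹ compactly supported function vanishes
lemma integral_fderiv_dir (g : (Fin 3 → ℝ) → ℝ) (hg : ContDiff ℝ 1 g)
    (hc : HasCompactSupport g) (v : Fin 3 → ℝ) :
    ∫ x, fderiv ℝ g x v = 0 := by
  have h1 : Differentiable ℝ (fun _ : Fin 3 → ℝ => (1:ℝ)) := differentiable_const 1
  have hgd : Differentiable ℝ g := hg.differentiable one_ne_zero
  have hfint : Integrable (fun x => fderiv ℝ g x v) := integrable_fderiv_dir g hg hc v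
  have := integral_mul_fderiv_eq_neg_fderiv_mul_of_integrable
    (μ := (volume : Measure (Fin 3 → ℝ))) (f := fun _ : Fin 3 → ℝ => (1:ℝ)) (g := g) (v := v)
    ?_ ?_ ?_ (fun x _ => h1 x) (fun x _ => hgd x)
  · simp only [one_mul] at this
    rw [this]
    simp [fderiv_const]
  · simpa [fderiv_const] using (integrable_zero _ _ _)
  · simpa using hfint
  · simpa using hg.continuous.integrable_of_hasCompactSupport hc

lemma integral_X1H (g : (Fin 3 → ℝ) → ℝ) (hg : ContDiff ℝ 1 g) (hc : HasCompactSupport g) :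
    ∫ x, X1H g x = 0 := by
  have hgd := hg.differentiable one_ne_zero
  have hcoef : ContDiff ℝ 1 (fun x : Fin 3 → ℝ => 2 * x 1) := contDiff_const.mul (contDiff_coord 1)
  have h2 : ContDiff ℝ 1 (fun x : Fin 3 → ℝ => 2 * x 1 * g x) := hcoef.mul hg
  have hc2 : HasCompactSupport (fun x : Fin 3 → ℝ => 2 * x 1 * g x) := hc.mul_left
  have key : ∀ x : Fin 3 → ℝ, fderiv ℝ (fun x : Fin 3 → ℝ => 2 * x 1 * g x) x ![0,0,1]
      = 2 * x 1 * fderiv ℝ g x ![0,0,1] := by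
    intro x
    have h1 : HasFDerivAt (fun y : Fin 3 → ℝ => 2 * y 1)
        ((2:ℝ) • ContinuousLinearMap.proj (R := ℝ) (φ := fun _ : Fin 3 => ℝ) 1) x :=
      (hasFDerivAt_coord 1 x).const_mul 2
    have hm := h1.mul (hgd x).hasFDerivAt
    simp only [Pi.mul_def] at hm
    rw [hm.fderiv]
    simp
  have heq : (fun x => X1H g x) = fun x => fderiv ℝ g x ![1,0,0]
      + fderiv ℝ (fun x : Fin 3 → ℝ => 2 * x 1 * g x) x ![0,0,1] :=
    funext fun x => by rw [X1H_eq, key x]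
  rw [heq, integral_add (integrable_fderiv_dir g hg hc _) (integrable_fderiv_dir _ h2 hc2 _),
    integral_fderiv_dir g hg hc _, integral_fderiv_dir _ h2 hc2 _, add_zero]

lemma integral_X2H (g : (Fin 3 → ℝ) → ℝ) (hg : ContDiff ℝ 1 g) (hc : HasCompactSupport g) :
    ∫ x, X2H g x = 0 := by
  have hgd := hg.differentiable one_ne_zero
  have hcoef : ContDiff ℝ 1 (fun x : Fin 3 → ℝ => -2 * x 0) := contDiff_const.mul (contDiff_coord 0)
  have h2 : ContDiff ℝ 1 (fun x : Fin 3 → ℝ => -2 * x 0 * g x) := hcoef.mul hg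
  have hc2 : HasCompactSupport (fun x : Fin 3 → ℝ => -2 * x 0 * g x) := hc.mul_left
  have key : ∀ x : Fin 3 → ℝ, fderiv ℝ (fun x : Fin 3 → ℝ => -2 * x 0 * g x) x ![0,0,1]
      = -2 * x 0 * fderiv ℝ g x ![0,0,1] := by
    intro x
    have h1 : HasFDerivAt (fun y : Fin 3 → ℝ => -2 * y 0)
        ((-2:ℝ) • ContinuousLinearMap.proj (R := ℝ) (φ := fun _ : Fin 3 => ℝ) 0) x :=
      (hasFDerivAt_coord 0 x).const_mul (-2)
    have hm := h1.mul (hgd x).hasFDerivAt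
    simp only [Pi.mul_def] at hm
    rw [hm.fderiv]
    simp
  have heq : (fun x => X2H g x) = fun x => fderiv ℝ g x ![0,1,0]
      + fderiv ℝ (fun x : Fin 3 → ℝ => -2 * x 0 * g x) x ![0,0,1] :=
    funext fun x => by rw [X2H_eq, key x]
  rw [heq, integral_add (integrable_fderiv_dir g hg hc _) (integrable_fderiv_dir _ h2 hc2 _),
    integral_fderiv_dir g hg hc _, integral_fderiv_dir _ h2 hc2 _, add_zero]

lemma continuous_X1H (g : (Fin 3 → ℝ) → ℝ) (hg : ContDiff ℝ 1 g) : Continuous (X1H g) := by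
  have hfd := hg.continuous_fderiv one_ne_zero
  have : Continuous fun x : Fin 3 → ℝ => fderiv ℝ g x ![1,0,0]
      + 2 * x 1 * fderiv ℝ g x ![0,0,1] :=
    ((ContinuousLinearMap.apply ℝ ℝ ![1,0,0]).continuous.comp hfd).add
      (((continuous_const.mul (continuous_apply 1))).mul
        ((ContinuousLinearMap.apply ℝ ℝ ![0,0,1]).continuous.comp hfd))
  exact this.congr fun x => (X1H_eq g x).symm

lemma continuous_X2H (g : (Fin 3 → ℝ) → ℝ) (hg : ContDiff ℝ 1 g) : Continuous (X2H g) := by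
  have hfd := hg.continuous_fderiv one_ne_zero
  have : Continuous fun x : Fin 3 → ℝ => fderiv ℝ g x ![0,1,0]
      + (-2 * x 0) * fderiv ℝ g x ![0,0,1] :=
    ((ContinuousLinearMap.apply ℝ ℝ ![0,1,0]).continuous.comp hfd).add
      (((continuous_const.mul (continuous_apply 0))).mul
        ((ContinuousLinearMap.apply ℝ ℝ ![0,0,1]).continuous.comp hfd))
  exact this.congr fun x => (X2H_eq g x).symm

lemma X1H_zero_of_nmem {g : (Fin 3 → ℝ) → ℝ} {x : Fin 3 → ℝ} (hx : x ∉ tsupport g) :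
    X1H g x = 0 := by
  have : fderiv ℝ g x = 0 := by
    by_contra h
    exact hx (support_fderiv_subset ℝ h)
  simp [X1H, this]

lemma X2H_zero_of_nmem {g : (Fin 3 → ℝ) → ℝ} {x : Fin 3 → ℝ} (hx : x ∉ tsupport g) :
    X2H g x = 0 := by
  have : fderiv ℝ g x = 0 := by
    by_contra h
    exact hx (support_fderiv_subset ℝ h)
  simp [X2H, this]


noncomputable def Phi (p t : ℝ) : ℝ := |t| ^ p
noncomputable def Phi' (p t : ℝ) : ℝ := p * |t| ^ (p - 2) * t

lemma abs_Phi' {p : ℝ} (hp : 1 < p) (t : ℝ) : |Phi' p t| = p * |t| ^ (p - 1) := by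
  rcases eq_or_ne t 0 with rfl | ht
  · simp [Phi', Real.zero_rpow (by linarith : p - 1 ≠ 0)]
  · have h0 : |t| ≠ 0 := abs_ne_zero.2 ht
    have : |t| ^ (p - 1) = |t| ^ (p - 2) * |t| := by
      rw [← Real.rpow_add_one h0 (p - 2)]; ring_nf
    rw [Phi', abs_mul, abs_mul, abs_of_nonneg (by positivity : (0:ℝ) ≤ p),
      abs_of_nonneg (Real.rpow_nonneg (abs_nonneg t) _), this]
    ring

lemma hasDerivAt_Phi {p : ℝ} (hp : 1 < p) (t : ℝ) : HasDerivAt (Phi p) (Phi' p t) t := by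
  rcases lt_trichotomy t 0 with h | rfl | h
  · have hne : -t ≠ 0 := by linarith
    have h1 : HasDerivAt (fun s : ℝ => (-s) ^ p) (-1 * p * (-t) ^ (p - 1)) t :=
      (hasDerivAt_neg t).rpow_const (Or.inl hne)
    have heq : (fun s : ℝ => (-s) ^ p) =ᶠ[nhds t] Phi p := by
      filter_upwards [Iio_mem_nhds h] with s hs
      rw [Phi, abs_of_neg hs]
    have hval : Phi' p t = -1 * p * (-t) ^ (p - 1) := by
      rw [Phi', abs_of_neg h]
      have : (-t) ^ (p - 1) = (-t) ^ (p - 2) * (-t) := by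
        rw [← Real.rpow_add_one hne (p - 2)]; ring_nf
      rw [this]; ring
    rw [hval]
    exact h1.congr_of_eventuallyEq heq.symm
  · have hval : Phi' p 0 = 0 := by simp [Phi']
    rw [hval, hasDerivAt_iff_tendsto]
    have hb : Tendsto (fun s : ℝ => |s| ^ (p - 1)) (nhds 0) (nhds 0) := by
      have hc : ContinuousAt (fun u : ℝ => u ^ (p - 1)) |(0:ℝ)| := by
        apply Real.continuousAt_rpow_const
        right; linarith
      have h2 := (hc.comp (continuous_abs.continuousAt (x := (0:ℝ)))).tendsto
      rw [Function.comp_def] at h2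
      simpa [Real.zero_rpow (by linarith : p - 1 ≠ 0)] using h2
    refine squeeze_zero_norm (fun s => ?_) hb
    have hPhi0 : Phi p 0 = 0 := by simp [Phi, Real.zero_rpow (by linarith : p ≠ 0)]
    rcases eq_or_ne s 0 with rfl | hs
    · simp [hPhi0, Real.zero_rpow (by linarith : p - 1 ≠ 0)]
    · have h0 : |s| ≠ 0 := abs_ne_zero.2 hs
      have hsp : Phi p s = |s| ^ p := rfl
      have hrw : |s| ^ p = |s| ^ (p - 1) * |s| := by
        rw [← Real.rpow_add_one h0 (p - 1)]; ring_nf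
      have hnn : (0:ℝ) ≤ |s| ^ p := Real.rpow_nonneg (abs_nonneg s) p
      simp only [smul_zero, sub_zero, hPhi0, hsp, norm_eq_abs, abs_abs]
      rw [abs_of_nonneg (by positivity), abs_of_nonneg hnn, hrw]
      rw [mul_comm (|s| ^ (p - 1)) |s|, ← mul_assoc, inv_mul_cancel₀ h0, one_mul]
  · have hne : t ≠ 0 := ne_of_gt h
    have h1 : HasDerivAt (fun s : ℝ => s ^ p) (1 * p * t ^ (p - 1)) t := by
      simpa using (hasDerivAt_id t).rpow_const (p := p) (Or.inl hne)
    have heq : (fun s : ℝ => s ^ p) =ᶠ[nhds t] Phi p := by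
      filter_upwards [Ioi_mem_nhds h] with s hs
      rw [Phi, abs_of_pos hs]
    have hval : Phi' p t = 1 * p * t ^ (p - 1) := by
      rw [Phi', abs_of_pos h]
      have : t ^ (p - 1) = t ^ (p - 2) * t := by
        rw [← Real.rpow_add_one hne (p - 2)]; ring_nf
      rw [this]; ring
    rw [hval]
    exact h1.congr_of_eventuallyEq heq.symm

lemma continuous_Phi' {p : ℝ} (hp : 1 < p) : Continuous (Phi' p) := by
  rw [continuous_iff_continuousAt]
  intro t
  rcases eq_or_ne t 0 with rfl | ht
  · have h0 : Phi' p 0 = 0 := by simp [Phi']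
    rw [ContinuousAt, h0]
    apply squeeze_zero_norm (fun s => le_of_eq (by rw [norm_eq_abs, abs_Phi' hp s]))
    have hc : ContinuousAt (fun u : ℝ => u ^ (p - 1)) |(0:ℝ)| :=
      Real.continuousAt_rpow_const _ _ (Or.inr (by linarith))
    have hb := (hc.comp (continuous_abs.continuousAt (x := (0:ℝ)))).tendsto
    have h1 : |(0:ℝ)| ^ (p - 1) = 0 := by
      simp [Real.zero_rpow (by linarith : p - 1 ≠ 0)]
    rw [Function.comp_def] at hb
    simp only [h1] at hb
    have := tendsto_const_nhds (x := p) (f := (nhds (0:ℝ))) |>.mul hb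
    simpa using this
  · have h1 : ContinuousAt (fun s : ℝ => |s| ^ (p - 2)) t :=
      (Real.continuousAt_rpow_const _ _ (Or.inl (abs_ne_zero.2 ht))).comp
        (continuous_abs.continuousAt)
    exact (continuousAt_const.mul h1).mul continuousAt_id

lemma contDiff_Phi {p : ℝ} (hp : 1 < p) : ContDiff ℝ 1 (Phi p) := by
  rw [contDiff_one_iff_deriv]
  constructor
  · exact fun t => (hasDerivAt_Phi hp t).differentiableAt
  · have : deriv (Phi p) = Phi' p := funext fun t => (hasDerivAt_Phi hp t).deriv
    rw [this]
    exact continuous_Phi' hp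

noncomputable section

def uu (n : Fin 3 → ℝ) (d : ℝ) (x : Fin 3 → ℝ) : ℝ :=
  x 0 * n 0 + x 1 * n 1 + x 2 * n 2 - d
def aa (n : Fin 3 → ℝ) (x : Fin 3 → ℝ) : ℝ := n 0 + 2 * x 1 * n 2
def bb (n : Fin 3 → ℝ) (x : Fin 3 → ℝ) : ℝ := n 1 - 2 * x 0 * n 2
def ww (n : Fin 3 → ℝ) (x : Fin 3 → ℝ) : ℝ := aa n x ^ 2 + bb n x ^ 2

def pr (i : Fin 3) : (Fin 3 → ℝ) →L[ℝ] ℝ :=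
  ContinuousLinearMap.proj (R := ℝ) (φ := fun _ : Fin 3 => ℝ) i
def Lu (n : Fin 3 → ℝ) : (Fin 3 → ℝ) →L[ℝ] ℝ := n 0 • pr 0 + n 1 • pr 1 + n 2 • pr 2
def La (n : Fin 3 → ℝ) : (Fin 3 → ℝ) →L[ℝ] ℝ := (2 * n 2) • pr 1
def Lb (n : Fin 3 → ℝ) : (Fin 3 → ℝ) →L[ℝ] ℝ := (-(2 * n 2)) • pr 0

lemma Lu_apply (n : Fin 3 → ℝ) (v : Fin 3 → ℝ) :
    Lu n v = n 0 * v 0 + n 1 * v 1 + n 2 * v 2 := by simp [Lu, pr]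
lemma La_apply (n : Fin 3 → ℝ) (v : Fin 3 → ℝ) : La n v = 2 * n 2 * v 1 := by simp [La, pr]
lemma Lb_apply (n : Fin 3 → ℝ) (v : Fin 3 → ℝ) : Lb n v = -(2 * n 2) * v 0 := by simp [Lb, pr]

lemma hasFDerivAt_uu (n : Fin 3 → ℝ) (d : ℝ) (x : Fin 3 → ℝ) :
    HasFDerivAt (uu n d) (Lu n) x := by
  have h : uu n d = fun y => Lu n y + (-d) := by
    funext y; rw [uu, Lu_apply]; ring
  rw [h]
  exact (Lu n).hasFDerivAt.add_const (-d)

lemma hasFDerivAt_aa (n : Fin 3 → ℝ) (x : Fin 3 → ℝ) :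
    HasFDerivAt (aa n) (La n) x := by
  have h : aa n = fun y => La n y + n 0 := by
    funext y; rw [aa, La_apply]; ring
  rw [h]
  exact (La n).hasFDerivAt.add_const (n 0)

lemma hasFDerivAt_bb (n : Fin 3 → ℝ) (x : Fin 3 → ℝ) :
    HasFDerivAt (bb n) (Lb n) x := by
  have h : bb n = fun y => Lb n y + n 1 := by
    funext y; rw [bb, Lb_apply]; ring
  rw [h]
  exact (Lb n).hasFDerivAt.add_const (n 1)

lemma hasFDerivAt_ww (n : Fin 3 → ℝ) (x : Fin 3 → ℝ) :
    HasFDerivAt (ww n) ((2 * aa n x) • La n + (2 * bb n x) • Lb n) x := by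
  have h := ((hasFDerivAt_aa n x).mul (hasFDerivAt_aa n x)).add
    ((hasFDerivAt_bb n x).mul (hasFDerivAt_bb n x))
  have e : ww n = aa n * aa n + bb n * bb n := by
    funext y; simp only [ww, Pi.add_apply, Pi.mul_apply]; ring
  rw [e]
  refine h.congr_fderiv ?_
  ext v
  simp only [ContinuousLinearMap.add_apply, ContinuousLinearMap.smul_apply, smul_eq_mul]
  ring

lemma div_identity (n : Fin 3 → ℝ) (d p ε : ℝ) (hε : ε ≠ 0)
    (t g : (Fin 3 → ℝ) → ℝ) (x : Fin 3 → ℝ)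
    (ht : t =ᶠ[nhds x] uu n d) (hux : 0 < uu n d x)
    (Lg : (Fin 3 → ℝ) →L[ℝ] ℝ) (hg : HasFDerivAt g Lg x) :
    X1H (fun y => (ww n y + ε^2) ^ ((p-2)/2) * aa n y * t y ^ (1-p) * g y) x
      + X2H (fun y => (ww n y + ε^2) ^ ((p-2)/2) * bb n y * t y ^ (1-p) * g y) x
    = (ww n x + ε^2) ^ ((p-2)/2) *
        ((1-p) * uu n d x ^ (-p) * ww n x * g x
          + uu n d x ^ (1-p) * (aa n x * Lg ![1,0,2*x 1] + bb n x * Lg ![0,1,-2*x 0])) := by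
  have hQpos : 0 < ww n x + ε ^ 2 := by
    have : 0 ≤ ww n x := by rw [ww]; positivity
    have : 0 < ε ^ 2 := by positivity
    linarith
  have hQ : HasFDerivAt (fun y => ww n y + ε ^ 2)
      ((2 * aa n x) • La n + (2 * bb n x) • Lb n) x := (hasFDerivAt_ww n x).add_const _
  have hA : HasFDerivAt (fun y => (ww n y + ε ^ 2) ^ ((p-2)/2))
      (((p-2)/2 * (ww n x + ε ^ 2) ^ ((p-2)/2 - 1)) • ((2 * aa n x) • La n + (2 * bb n x) • Lb n)) x :=
    hQ.rpow_const (Or.inl hQpos.ne')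
  have ht' : HasFDerivAt t (Lu n) x := (hasFDerivAt_uu n d x).congr_of_eventuallyEq ht
  have htx : t x = uu n d x := ht.eq_of_nhds
  have htxne : t x ≠ 0 := by rw [htx]; exact hux.ne'
  have hT : HasFDerivAt (fun y => t y ^ (1 - p)) (((1 - p) * t x ^ (1 - p - 1)) • Lu n) x :=
    ht'.rpow_const (Or.inl htxne)
  have hV1 := ((hA.mul (hasFDerivAt_aa n x)).mul hT).mul hg
  have hV2 := ((hA.mul (hasFDerivAt_bb n x)).mul hT).mul hg
  have e1 : (1:ℝ) - p - 1 = -p := by ring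
  simp only [Pi.mul_def] at hV1 hV2
  rw [X1H, X2H, hV1.fderiv, hV2.fderiv]
  simp only [ContinuousLinearMap.add_apply, ContinuousLinearMap.smul_apply, smul_eq_mul,
    Lu_apply, La_apply, Lb_apply, Matrix.cons_val_zero, Matrix.cons_val_one, Matrix.head_cons,
    Matrix.cons_val_two, Matrix.tail_cons, htx, e1]
  rw [ww, aa, bb] at *
  ring


noncomputable def chi (m t : ℝ) : ℝ :=
  Real.smoothTransition (2 * t / m - 1) * t
    + (1 - Real.smoothTransition (2 * t / m - 1)) * (m / 2)

lemma contDiff_chi (m : ℝ) : ContDiff ℝ 1 (chi m) := by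
  have h1 : ContDiff ℝ 1 (fun t : ℝ => Real.smoothTransition (2 * t / m - 1)) :=
    Real.smoothTransition.contDiff.comp
      (((contDiff_id.const_smul (2:ℝ)).div_const m).sub contDiff_const)
  exact (h1.mul contDiff_id).add ((contDiff_const.sub h1).mul contDiff_const)

lemma chi_lb {m : ℝ} (hm : 0 < m) (t : ℝ) : m / 2 ≤ chi m t := by
  rcases le_or_gt t (m / 2) with h | h
  · have harg : 2 * t / m - 1 ≤ 0 := by
      rw [sub_nonpos, div_le_one hm]
      linarith
    rw [chi, Real.smoothTransition.zero_of_nonpos harg]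
    simp
  · have h0 := Real.smoothTransition.nonneg (2 * t / m - 1)
    have h1 := Real.smoothTransition.le_one (2 * t / m - 1)
    rw [chi]
    nlinarith

lemma chi_pos {m : ℝ} (hm : 0 < m) (t : ℝ) : 0 < chi m t :=
  lt_of_lt_of_le (by linarith) (chi_lb hm t)

lemma chi_eq {m t : ℝ} (hm : 0 < m) (h : m ≤ t) : chi m t = t := by
  have harg : 1 ≤ 2 * t / m - 1 := by
    rw [le_sub_iff_add_le, le_div_iff₀ hm]
    linarith
  rw [chi, Real.smoothTransition.one_of_one_le harg]
  ring


lemma cont_rpow_comp {g : (Fin 3 → ℝ) → ℝ} (hg : Continuous g) (s : ℝ)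
    (h : ∀ x, g x ≠ 0 ∨ 0 ≤ s) : Continuous fun x => g x ^ s :=
  continuous_iff_continuousAt.2 fun x =>
    (Real.continuousAt_rpow_const (g x) s (h x)).comp hg.continuousAt

lemma integrable_of_cont_support {K : Set (Fin 3 → ℝ)} (hK : IsCompact K)
    {g : (Fin 3 → ℝ) → ℝ} (hg : Continuous g) (hsupp : Function.support g ⊆ K) :
    Integrable g := by
  apply hg.integrable_of_hasCompactSupport
  exact hK.of_isClosed_subset isClosed_closure (closure_minimal hsupp hK.isClosed)

lemma seq_eps_pos (k : ℕ) : (0:ℝ) < ((k:ℝ)+1)⁻¹ ^ 2 := by positivity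

lemma seq_eps_le_one (k : ℕ) : ((k:ℝ)+1)⁻¹ ^ 2 ≤ 1 := by
  have h0 : (0:ℝ) ≤ (k:ℝ) := Nat.cast_nonneg k
  have h1 : (1:ℝ) ≤ (k:ℝ) + 1 := by linarith
  have : ((k:ℝ)+1)⁻¹ ≤ 1 := by
    rw [inv_le_one_iff₀]; right; exact h1
  nlinarith [inv_nonneg.2 (by linarith : (0:ℝ) ≤ (k:ℝ)+1)]

lemma seq_eps_tendsto : Tendsto (fun k : ℕ => ((k:ℝ)+1)⁻¹ ^ 2) atTop (nhds 0) := by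
  have h : Tendsto (fun k : ℕ => ((k:ℝ)+1)⁻¹) atTop (nhds 0) :=
    tendsto_one_div_add_atTop_nhds_zero_nat.congr (by intro k; rw [one_div])
  have h2 : Tendsto (fun k : ℕ => ((k:ℝ)+1)⁻¹ * ((k:ℝ)+1)⁻¹) atTop (nhds (0*0)) := h.mul h
  rw [mul_zero] at h2
  exact h2.congr fun k => (pow_two _).symm

lemma dct_aux {K : Set (Fin 3 → ℝ)} (hK : IsCompact K)
    (w r : (Fin 3 → ℝ) → ℝ) (hw : Continuous w) (hw0 : ∀ x, 0 ≤ w x)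
    (hr : Continuous r) (hr0 : ∀ x, 0 ≤ r x) (hrK : Function.support r ⊆ K)
    (s σ : ℝ) (hσ : 0 < σ) (hsσ : 0 < s + σ) :
    Tendsto (fun k : ℕ => ∫ x, (w x + ((k:ℝ)+1)⁻¹ ^ 2) ^ s * (w x) ^ σ * r x) atTop
      (nhds (∫ x, (w x) ^ (s + σ) * r x)) := by
  have hwσ : Continuous fun x => w x ^ σ := cont_rpow_comp hw σ (fun x => Or.inr hσ.le)
  have hFk : ∀ k : ℕ, Continuous fun x => (w x + ((k:ℝ)+1)⁻¹ ^ 2) ^ s * (w x) ^ σ * r x := by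
    intro k
    have hb : Continuous fun x => w x + ((k:ℝ)+1)⁻¹ ^ 2 := hw.add continuous_const
    have h1 : Continuous fun x => (w x + ((k:ℝ)+1)⁻¹ ^ 2) ^ s :=
      cont_rpow_comp hb s (fun x => Or.inl (by have := seq_eps_pos k; have := hw0 x; positivity))
    exact (h1.mul hwσ).mul hr
  have hlim : ∀ x, Tendsto (fun k : ℕ => (w x + ((k:ℝ)+1)⁻¹ ^ 2) ^ s * (w x) ^ σ * r x) atTop
      (nhds ((w x) ^ (s + σ) * r x)) := by
    intro x
    rcases eq_or_lt_of_le (hw0 x) with h0 | h0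
    · have hz : ∀ k : ℕ, (w x + ((k:ℝ)+1)⁻¹ ^ 2) ^ s * (w x) ^ σ * r x = 0 := by
        intro k
        rw [← h0, Real.zero_rpow hσ.ne']
        ring
      have hz2 : (w x) ^ (s + σ) * r x = 0 := by
        rw [← h0, Real.zero_rpow hsσ.ne']
        ring
      rw [hz2]
      exact tendsto_const_nhds.congr (fun k => (hz k).symm)
    · have hb : Tendsto (fun k : ℕ => w x + ((k:ℝ)+1)⁻¹ ^ 2) atTop (nhds (w x)) := by
        simpa using tendsto_const_nhds.add seq_eps_tendsto
      have hc : ContinuousAt (fun u : ℝ => u ^ s) (w x) :=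
        Real.continuousAt_rpow_const _ _ (Or.inl h0.ne')
      have h1 : Tendsto (fun k : ℕ => (w x + ((k:ℝ)+1)⁻¹ ^ 2) ^ s) atTop (nhds ((w x) ^ s)) :=
        (hc.tendsto).comp hb
      have h2 : Tendsto (fun k : ℕ => (w x + ((k:ℝ)+1)⁻¹ ^ 2) ^ s * (w x) ^ σ * r x) atTop
          (nhds ((w x) ^ s * (w x) ^ σ * r x)) :=
        (h1.mul (tendsto_const_nhds (x := (w x) ^ σ))).mul (tendsto_const_nhds (x := r x))
      have : (w x) ^ s * (w x) ^ σ * r x = (w x) ^ (s + σ) * r x := by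
        rw [← Real.rpow_add h0]
      rw [← this]
      exact h2
  rcases le_or_gt 0 s with hs | hs
  · -- bound : (w+1)^s * w^σ * r
    apply tendsto_integral_of_dominated_convergence (fun x => (w x + 1) ^ s * (w x) ^ σ * r x)
    · exact fun k => (hFk k).aestronglyMeasurable
    · apply integrable_of_cont_support hK
      · have hb : Continuous fun x => w x + 1 := hw.add continuous_const
        exact ((cont_rpow_comp hb s (fun x => Or.inl (by have := hw0 x; positivity))).mul
          hwσ).mul hr
      · intro x hx
        apply hrK
        simp only [Function.mem_support] at hx ⊢
        intro hrx
        exact hx (by rw [hrx, mul_zero])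
    · intro k
      filter_upwards with x
      have h1 : (0:ℝ) ≤ (w x + ((k:ℝ)+1)⁻¹ ^ 2) ^ s := by
        apply Real.rpow_nonneg
        have := seq_eps_pos k; have := hw0 x; linarith
      have h2 : (0:ℝ) ≤ (w x) ^ σ := Real.rpow_nonneg (hw0 x) σ
      rw [norm_eq_abs, abs_of_nonneg (by have := hr0 x; positivity)]
      have hble : (w x + ((k:ℝ)+1)⁻¹ ^ 2) ^ s ≤ (w x + 1) ^ s := by
        apply Real.rpow_le_rpow (by have := seq_eps_pos k; have := hw0 x; linarith)
          (by have := seq_eps_le_one k; linarith) hs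
      exact mul_le_mul_of_nonneg_right (mul_le_mul_of_nonneg_right hble h2) (hr0 x)
    · filter_upwards with x
      exact hlim x
  · -- s < 0 : bound w^(s+σ) * r
    apply tendsto_integral_of_dominated_convergence (fun x => (w x) ^ (s + σ) * r x)
    · exact fun k => (hFk k).aestronglyMeasurable
    · apply integrable_of_cont_support hK
      · exact (cont_rpow_comp hw (s + σ) (fun x => Or.inr hsσ.le)).mul hr
      · intro x hx
        apply hrK
        simp only [Function.mem_support] at hx ⊢
        intro hrx
        exact hx (by rw [hrx, mul_zero])
    · intro k
      filter_upwards with x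
      rcases eq_or_lt_of_le (hw0 x) with h0 | h0
      · rw [← h0, Real.zero_rpow hσ.ne', Real.zero_rpow hsσ.ne']
        simp
      · rw [norm_eq_abs, abs_of_nonneg]
        · have hble : (w x + ((k:ℝ)+1)⁻¹ ^ 2) ^ s ≤ (w x) ^ s := by
            apply Real.rpow_le_rpow_of_nonpos h0
              (by have := seq_eps_pos k; linarith) hs.le
          have h2 : (0:ℝ) ≤ (w x) ^ σ := Real.rpow_nonneg (hw0 x) σ
          have h3 : (w x) ^ s * (w x) ^ σ = (w x) ^ (s + σ) := by
            rw [← Real.rpow_add h0]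
          rw [← h3]
          exact mul_le_mul_of_nonneg_right (mul_le_mul_of_nonneg_right hble h2) (hr0 x)
        · have h1 : (0:ℝ) ≤ (w x + ((k:ℝ)+1)⁻¹ ^ 2) ^ s := by
            apply Real.rpow_nonneg
            have := seq_eps_pos k; linarith
          have h2 : (0:ℝ) ≤ (w x) ^ σ := Real.rpow_nonneg (hw0 x) σ
          have := hr0 x
          positivity
    · filter_upwards with x
      exact hlim x


lemma young_aux {p : ℝ} (hp : 1 < p) {G B : ℝ} (hG : 0 ≤ G) (hB : 0 ≤ B) :
    p * G * B ≤ (((p-1)/p) ^ ((p-1)/p)) ^ (-p) * G ^ p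
      + (p-1) * ((p-1)/p) * B ^ (p/(p-1)) := by
  have hp0 : 0 < p := by linarith
  have hp1 : 0 < p - 1 := by linarith
  have hr : 0 < (p-1)/p := by positivity
  set t : ℝ := ((p-1)/p) ^ ((p-1)/p) with htdef
  have ht : 0 < t := Real.rpow_pos_of_pos hr _
  have hpq : p.HolderConjugate (p/(p-1)) := (Real.holderConjugate_iff_eq_conjExponent hp).2 rfl
  have h := Real.young_inequality_of_nonneg (div_nonneg hG ht.le) (mul_nonneg ht.le hB) hpq
  have hGB : G * B = G / t * (t * B) := by field_simp
  have e1 : (G / t) ^ p = t ^ (-p) * G ^ p := by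
    rw [Real.div_rpow hG ht.le, Real.rpow_neg ht.le]
    ring
  have e2 : (t * B) ^ (p/(p-1)) = (p-1)/p * B ^ (p/(p-1)) := by
    rw [Real.mul_rpow ht.le hB]
    congr 1
    rw [htdef, ← Real.rpow_mul hr.le]
    rw [show (p-1)/p * (p/(p-1)) = 1 by field_simp]
    exact Real.rpow_one _
  have hq : 0 < p/(p-1) := by positivity
  calc p * G * B = p * (G / t * (t * B)) := by rw [← hGB]; ring
    _ ≤ p * ((G/t) ^ p / p + (t*B) ^ (p/(p-1)) / (p/(p-1))) := by
        apply mul_le_mul_of_nonneg_left h hp0.le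
    _ = (G/t) ^ p + (p-1) * ((t*B) ^ (p/(p-1))) := by
        field_simp
    _ = t ^ (-p) * G ^ p + (p-1) * ((p-1)/p * B ^ (p/(p-1))) := by rw [e1, e2]
    _ = t ^ (-p) * G ^ p + (p-1) * ((p-1)/p) * B ^ (p/(p-1)) := by ring

lemma cs_aux (a b X Y : ℝ) :
    |a * X + b * Y| ≤ ((a^2+b^2) ^ ((1:ℝ)/2)) * ((X^2+Y^2) ^ ((1:ℝ)/2)) := by
  have h2 : |a*X+b*Y| = Real.sqrt ((a*X+b*Y)^2) := (Real.sqrt_sq_eq_abs _).symm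
  have h3 : (a*X+b*Y)^2 ≤ (a^2+b^2)*(X^2+Y^2) := by nlinarith [sq_nonneg (a*Y - b*X)]
  rw [h2, ← Real.sqrt_eq_rpow, ← Real.sqrt_eq_rpow, ← Real.sqrt_mul (by positivity)]
  exact Real.sqrt_le_sqrt h3

lemma pointwise_bound {p : ℝ} (hp : 1 < p) (A T W S2 F Z : ℝ)
    (hA : 0 ≤ A) (hT : 0 < T) (hW : 0 ≤ W) (hS2 : 0 ≤ S2) (hF : 0 ≤ F)
    (hZ : Z ≤ p * F ^ (p-1) * (W ^ ((1:ℝ)/2) * S2 ^ ((1:ℝ)/2))) :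
    A * T ^ (1-p) * Z ≤ (((p-1)/p) ^ ((p-1)/p)) ^ (-p) * S2 ^ (p/2)
      + (p-1) * ((p-1)/p) * (A ^ (p/(p-1)) * W ^ ((p/(p-1))/2) * (T ^ (-p) * F ^ p)) := by
  have hp1 : 0 < p - 1 := by linarith
  have hT1 : 0 ≤ T ^ (1-p) := Real.rpow_nonneg hT.le _
  have hpre : 0 ≤ A * T ^ (1-p) := mul_nonneg hA hT1
  have step1 : A * T ^ (1-p) * Z
      ≤ p * (S2 ^ ((1:ℝ)/2)) * (A * T ^ (1-p) * F ^ (p-1) * W ^ ((1:ℝ)/2)) := by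
    calc A * T ^ (1-p) * Z ≤ A * T ^ (1-p) * (p * F ^ (p-1) * (W ^ ((1:ℝ)/2) * S2 ^ ((1:ℝ)/2))) :=
          mul_le_mul_of_nonneg_left hZ hpre
      _ = p * (S2 ^ ((1:ℝ)/2)) * (A * T ^ (1-p) * F ^ (p-1) * W ^ ((1:ℝ)/2)) := by ring
  have hG : 0 ≤ S2 ^ ((1:ℝ)/2) := Real.rpow_nonneg hS2 _
  have hB : 0 ≤ A * T ^ (1-p) * F ^ (p-1) * W ^ ((1:ℝ)/2) := by positivity
  have step2 := young_aux hp hG hB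
  have e1 : (S2 ^ ((1:ℝ)/2)) ^ p = S2 ^ (p/2) := by
    rw [← Real.rpow_mul hS2, show (1:ℝ)/2*p = p/2 by ring]
  have e2 : (A * T ^ (1-p) * F ^ (p-1) * W ^ ((1:ℝ)/2)) ^ (p/(p-1))
      = A ^ (p/(p-1)) * W ^ ((p/(p-1))/2) * (T ^ (-p) * F ^ p) := by
    rw [Real.mul_rpow (by positivity) (Real.rpow_nonneg hW _),
      Real.mul_rpow (by positivity) (Real.rpow_nonneg hF _),
      Real.mul_rpow hA hT1]
    rw [← Real.rpow_mul hT.le, ← Real.rpow_mul hF, ← Real.rpow_mul hW]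
    rw [show (1-p) * (p/(p-1)) = -p by field_simp; ring]
    rw [show (p-1) * (p/(p-1)) = p by field_simp]
    rw [show (1:ℝ)/2 * (p/(p-1)) = (p/(p-1))/2 by ring]
    ring
  calc A * T ^ (1-p) * Z
      ≤ p * (S2 ^ ((1:ℝ)/2)) * (A * T ^ (1-p) * F ^ (p-1) * W ^ ((1:ℝ)/2)) := step1
    _ ≤ (((p-1)/p) ^ ((p-1)/p)) ^ (-p) * (S2 ^ ((1:ℝ)/2)) ^ p
        + (p-1) * ((p-1)/p) * ((A * T ^ (1-p) * F ^ (p-1) * W ^ ((1:ℝ)/2)) ^ (p/(p-1))) := step2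
    _ = (((p-1)/p) ^ ((p-1)/p)) ^ (-p) * S2 ^ (p/2)
        + (p-1) * ((p-1)/p) * (A ^ (p/(p-1)) * W ^ ((p/(p-1))/2) * (T ^ (-p) * F ^ p)) := by
        rw [e1, e2]

end
/-- the sharp geometric Hardy inequality on half-spaces
`Ω⁺ = {⟨x,n⟩ > d}` in the Heisenberg group. -/
theorem stmt_9 (n : Fin 3 → ℝ) (hn : n 0 ^ 2 + n 1 ^ 2 + n 2 ^ 2 = 1) (d : ℝ)
    (p : ℝ) (hp : 1 < p)
    (f : (Fin 3 → ℝ) → ℝ)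
    (hf : ContDiff ℝ (⊤ : ℕ∞) f) (hfc : HasCompactSupport f)
    (hfs : tsupport f ⊆ {x : Fin 3 → ℝ | x 0 * n 0 + x 1 * n 1 + x 2 * n 2 > d}) :
    ∫ x in {x : Fin 3 → ℝ | x 0 * n 0 + x 1 * n 1 + x 2 * n 2 > d},
        ((X1H f x) ^ 2 + (X2H f x) ^ 2) ^ (p / 2) ≥
      ((p - 1) / p) ^ p *
        ∫ x in {x : Fin 3 → ℝ | x 0 * n 0 + x 1 * n 1 + x 2 * n 2 > d},
          ((n 0 + 2 * x 1 * n 2) ^ 2 + (n 1 - 2 * x 0 * n 2) ^ 2) ^ (p / 2)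
            / (x 0 * n 0 + x 1 * n 1 + x 2 * n 2 - d) ^ p * |f x| ^ p := by
  have hp0 : (0:ℝ) < p := lt_trans one_pos hp
  have hp1 : (0:ℝ) < p - 1 := by linarith
  have hp2 : p / 2 ≠ 0 := by positivity
  have hf1 : ContDiff ℝ 1 f := hf.of_le (by exact_mod_cast le_top)
  -- trivial case : f ≡ 0
  by_cases hK0 : tsupport f = ∅
  · have hf0 : ∀ x, f x = 0 := by
      intro x
      by_contra hfx
      have : x ∈ tsupport f := subset_tsupport f (Function.mem_support.2 hfx)
      rw [hK0] at this
      exact this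
    have hfz : f = fun _ => (0:ℝ) := funext hf0
    rw [hfz]
    have h1 : ∀ x : Fin 3 → ℝ, X1H (fun _ => (0:ℝ)) x = 0 := fun x => by
      simp [X1H, fderiv_const]
    have h2 : ∀ x : Fin 3 → ℝ, X2H (fun _ => (0:ℝ)) x = 0 := fun x => by
      simp [X2H, fderiv_const]
    have hL : ∀ x : Fin 3 → ℝ,
        ((X1H (fun _ => (0:ℝ)) x) ^ 2 + (X2H (fun _ => (0:ℝ)) x) ^ 2) ^ (p / 2) = 0 := by
      intro x
      rw [h1, h2]
      norm_num
      exact Real.zero_rpow hp2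
    have hR : ∀ x : Fin 3 → ℝ,
        ((n 0 + 2 * x 1 * n 2) ^ 2 + (n 1 - 2 * x 0 * n 2) ^ 2) ^ (p / 2)
          / (x 0 * n 0 + x 1 * n 1 + x 2 * n 2 - d) ^ p * |(0:ℝ)| ^ p = 0 := by
      intro x
      rw [abs_zero, Real.zero_rpow hp0.ne', mul_zero]
    simp only [hL, hR]
    simp
  -- main case
  push_neg at hK0
  have hKne : (tsupport f).Nonempty := hK0
  have hKc : IsCompact (tsupport f) := hfc
  have huu_eq : uu n d = fun x => Lu n x + (-d) := by
    funext y; rw [uu, Lu_apply]; ring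
  have hu_cd : ContDiff ℝ 1 (uu n d) := by
    rw [huu_eq]; exact (Lu n).contDiff.add contDiff_const
  have hu_cont : Continuous (uu n d) := hu_cd.continuous
  have memS : ∀ x : Fin 3 → ℝ,
      x ∈ {x : Fin 3 → ℝ | x 0 * n 0 + x 1 * n 1 + x 2 * n 2 > d} ↔ 0 < uu n d x := by
    intro x
    simp only [Set.mem_setOf_eq, gt_iff_lt, uu, sub_pos]
  obtain ⟨x₀, hx₀K, hmin⟩ := hKc.exists_isMinOn hKne hu_cont.continuousOn
  have hx₀pos : 0 < uu n d x₀ := (memS x₀).1 (hfs hx₀K)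
  set m : ℝ := uu n d x₀ / 2 with hmdef
  have hm : 0 < m := by rw [hmdef]; linarith
  have hKm : ∀ x ∈ tsupport f, m < uu n d x := by
    intro x hx
    have h1 : uu n d x₀ ≤ uu n d x := isMinOn_iff.1 hmin x hx
    rw [hmdef]; linarith
  set tf : (Fin 3 → ℝ) → ℝ := fun x => chi m (uu n d x) with htfdef
  have htf_pos : ∀ x, 0 < tf x := fun x => chi_pos hm _
  have htf_cd : ContDiff ℝ 1 tf := (contDiff_chi m).comp hu_cd
  have htf_cont : Continuous tf := htf_cd.continuous
  have hopen : IsOpen {y : Fin 3 → ℝ | m < uu n d y} := isOpen_lt continuous_const hu_cont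
  have htf_ev : ∀ x ∈ tsupport f, tf =ᶠ[nhds x] uu n d := by
    intro x hx
    filter_upwards [hopen.mem_nhds (hKm x hx)] with y hy
    exact chi_eq hm (le_of_lt hy)
  have htf_eqK : ∀ x ∈ tsupport f, tf x = uu n d x := fun x hx => chi_eq hm (le_of_lt (hKm x hx))
  -- the function φ = |f|^p
  have hφc : HasCompactSupport (fun x => Phi p (f x)) :=
    hfc.comp_left (g := Phi p) (by simp [Phi, Real.zero_rpow hp0.ne'])
  have hφ1 : ContDiff ℝ 1 (fun x => Phi p (f x)) := (contDiff_Phi hp).comp hf1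
  have hφ_cont : Continuous (fun x => Phi p (f x)) := hφ1.continuous
  have hφ0 : ∀ x, 0 ≤ Phi p (f x) := fun x => Real.rpow_nonneg (abs_nonneg _) _
  have hφ_zero : ∀ x, f x = 0 → Phi p (f x) = 0 := by
    intro x hx
    rw [hx]
    simp [Phi, Real.zero_rpow hp0.ne']
  have hφfd : ∀ x, HasFDerivAt (fun y => Phi p (f y)) (Phi' p (f x) • fderiv ℝ f x) x :=
    fun x => (hasDerivAt_Phi hp (f x)).comp_hasFDerivAt x ((hf1.differentiable one_ne_zero) x).hasFDerivAt
  -- continuity of building blocks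
  have haa_cd : ContDiff ℝ 1 (aa n) := by
    have : aa n = fun y => La n y + n 0 := by funext y; rw [aa, La_apply]; ring
    rw [this]; exact (La n).contDiff.add contDiff_const
  have hbb_cd : ContDiff ℝ 1 (bb n) := by
    have : bb n = fun y => Lb n y + n 1 := by funext y; rw [bb, Lb_apply]; ring
    rw [this]; exact (Lb n).contDiff.add contDiff_const
  have hww_cd : ContDiff ℝ 1 (ww n) := by
    have : ww n = fun x => aa n x * aa n x + bb n x * bb n x := by
      funext x; rw [ww]; ring
    rw [this]; exact (haa_cd.mul haa_cd).add (hbb_cd.mul hbb_cd)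
  have hww_cont : Continuous (ww n) := hww_cd.continuous
  have hww0 : ∀ x, 0 ≤ ww n x := by
    intro x; rw [ww]; positivity
  have hX1f : Continuous (X1H f) := continuous_X1H f hf1
  have hX2f : Continuous (X2H f) := continuous_X2H f hf1
  have hPhf_cont : Continuous fun x => Phi' p (f x) := (continuous_Phi' hp).comp hf1.continuous
  have hPhf_zero : ∀ x, f x = 0 → Phi' p (f x) = 0 := by
    intro x hx; rw [hx]; simp [Phi']
  -- the weight r
  have hr_cont : Continuous (fun x => tf x ^ (-p) * Phi p (f x)) :=
    (cont_rpow_comp htf_cont (-p) (fun x => Or.inl (htf_pos x).ne')).mul hφ_cont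
  have hr0 : ∀ x, 0 ≤ tf x ^ (-p) * Phi p (f x) := fun x =>
    mul_nonneg (Real.rpow_nonneg (htf_pos x).le _) (hφ0 x)
  have hr_supp : Function.support (fun x => tf x ^ (-p) * Phi p (f x)) ⊆ tsupport f := by
    intro x hx
    apply subset_tsupport f
    simp only [Function.mem_support] at hx ⊢
    intro h0
    exact hx (by rw [hφ_zero x h0, mul_zero])
  -- the key inequality for each regularization parameter
  have key : ∀ k : ℕ,
      (p-1) * (∫ x, (ww n x + ((k:ℝ)+1)⁻¹ ^ 2) ^ ((p-2)/2) * (ww n x) ^ (1:ℝ)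
          * (tf x ^ (-p) * Phi p (f x)))
      ≤ (((p-1)/p) ^ ((p-1)/p)) ^ (-p)
            * (∫ x, ((X1H f x) ^ 2 + (X2H f x) ^ 2) ^ (p/2))
        + (p-1) * ((p-1)/p) *
          (∫ x, (ww n x + ((k:ℝ)+1)⁻¹ ^ 2) ^ (((p-2)/2) * (p/(p-1)))
            * (ww n x) ^ ((p/(p-1))/2) * (tf x ^ (-p) * Phi p (f x))) := by
    intro k
    have hε : ((k:ℝ)+1)⁻¹ ≠ 0 := by positivity
    have hbase_pos : ∀ y, 0 < ww n y + ((k:ℝ)+1)⁻¹ ^ 2 := fun y => by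
      have h1 := hww0 y
      have h2 : (0:ℝ) < ((k:ℝ)+1)⁻¹ ^ 2 := by positivity
      linarith
    have hbase_cd : ContDiff ℝ 1 (fun y => ww n y + ((k:ℝ)+1)⁻¹ ^ 2) :=
      hww_cd.add contDiff_const
    have hA_cd : ContDiff ℝ 1 (fun y => (ww n y + ((k:ℝ)+1)⁻¹ ^ 2) ^ ((p-2)/2)) :=
      contDiff_iff_contDiffAt.2 fun y =>
        ContDiffAt.rpow_const_of_ne hbase_cd.contDiffAt (hbase_pos y).ne'
    have hA_cont : Continuous (fun y => (ww n y + ((k:ℝ)+1)⁻¹ ^ 2) ^ ((p-2)/2)) :=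
      hA_cd.continuous
    have hT_cd : ContDiff ℝ 1 (fun y => tf y ^ (1-p)) :=
      contDiff_iff_contDiffAt.2 fun y =>
        ContDiffAt.rpow_const_of_ne htf_cd.contDiffAt (htf_pos y).ne'
    have hg1_cd : ContDiff ℝ 1 (fun y =>
        (ww n y + ((k:ℝ)+1)⁻¹ ^ 2) ^ ((p-2)/2) * aa n y * tf y ^ (1-p) * Phi p (f y)) :=
      ((hA_cd.mul haa_cd).mul hT_cd).mul hφ1
    have hg2_cd : ContDiff ℝ 1 (fun y =>
        (ww n y + ((k:ℝ)+1)⁻¹ ^ 2) ^ ((p-2)/2) * bb n y * tf y ^ (1-p) * Phi p (f y)) :=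
      ((hA_cd.mul hbb_cd).mul hT_cd).mul hφ1
    have hg1_cs : HasCompactSupport (fun y =>
        (ww n y + ((k:ℝ)+1)⁻¹ ^ 2) ^ ((p-2)/2) * aa n y * tf y ^ (1-p) * Phi p (f y)) :=
      HasCompactSupport.intro hKc (fun x hx => by
        rw [hφ_zero x (image_eq_zero_of_notMem_tsupport hx), mul_zero])
    have hg2_cs : HasCompactSupport (fun y =>
        (ww n y + ((k:ℝ)+1)⁻¹ ^ 2) ^ ((p-2)/2) * bb n y * tf y ^ (1-p) * Phi p (f y)) :=
      HasCompactSupport.intro hKc (fun x hx => by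
        rw [hφ_zero x (image_eq_zero_of_notMem_tsupport hx), mul_zero])
    have hts_g1 : tsupport (fun y =>
        (ww n y + ((k:ℝ)+1)⁻¹ ^ 2) ^ ((p-2)/2) * aa n y * tf y ^ (1-p) * Phi p (f y))
        ⊆ tsupport f := by
      apply closure_minimal ?_ (isClosed_tsupport f)
      intro x hx
      apply subset_tsupport f
      simp only [Function.mem_support] at hx ⊢
      intro h0
      exact hx (by rw [hφ_zero x h0, mul_zero])
    have hts_g2 : tsupport (fun y =>
        (ww n y + ((k:ℝ)+1)⁻¹ ^ 2) ^ ((p-2)/2) * bb n y * tf y ^ (1-p) * Phi p (f y))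
        ⊆ tsupport f := by
      apply closure_minimal ?_ (isClosed_tsupport f)
      intro x hx
      apply subset_tsupport f
      simp only [Function.mem_support] at hx ⊢
      intro h0
      exact hx (by rw [hφ_zero x h0, mul_zero])
    have hint_X1g1 : Integrable (X1H (fun y =>
        (ww n y + ((k:ℝ)+1)⁻¹ ^ 2) ^ ((p-2)/2) * aa n y * tf y ^ (1-p) * Phi p (f y))) := by
      apply integrable_of_cont_support hKc (continuous_X1H _ hg1_cd)
      intro x hx
      by_contra hxf
      exact (Function.mem_support.1 hx) (X1H_zero_of_nmem (fun hmem => hxf (hts_g1 hmem)))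
    have hint_X2g2 : Integrable (X2H (fun y =>
        (ww n y + ((k:ℝ)+1)⁻¹ ^ 2) ^ ((p-2)/2) * bb n y * tf y ^ (1-p) * Phi p (f y))) := by
      apply integrable_of_cont_support hKc (continuous_X2H _ hg2_cd)
      intro x hx
      by_contra hxf
      exact (Function.mem_support.1 hx) (X2H_zero_of_nmem (fun hmem => hxf (hts_g2 hmem)))
    have hIBP : ∫ x, (X1H (fun y =>
        (ww n y + ((k:ℝ)+1)⁻¹ ^ 2) ^ ((p-2)/2) * aa n y * tf y ^ (1-p) * Phi p (f y)) x
        + X2H (fun y =>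
        (ww n y + ((k:ℝ)+1)⁻¹ ^ 2) ^ ((p-2)/2) * bb n y * tf y ^ (1-p) * Phi p (f y)) x) = 0 := by
      rw [integral_add hint_X1g1 hint_X2g2, integral_X1H _ hg1_cd hg1_cs,
        integral_X2H _ hg2_cd hg2_cs, add_zero]
    have hdiv : ∀ x, X1H (fun y =>
        (ww n y + ((k:ℝ)+1)⁻¹ ^ 2) ^ ((p-2)/2) * aa n y * tf y ^ (1-p) * Phi p (f y)) x
        + X2H (fun y =>
        (ww n y + ((k:ℝ)+1)⁻¹ ^ 2) ^ ((p-2)/2) * bb n y * tf y ^ (1-p) * Phi p (f y)) x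
      = (ww n x + ((k:ℝ)+1)⁻¹ ^ 2) ^ ((p-2)/2) * tf x ^ (1-p)
            * (Phi' p (f x) * (aa n x * X1H f x + bb n x * X2H f x))
        - (p-1) * ((ww n x + ((k:ℝ)+1)⁻¹ ^ 2) ^ ((p-2)/2) * (ww n x) ^ (1:ℝ)
            * (tf x ^ (-p) * Phi p (f x))) := by
      intro x
      by_cases hx : x ∈ tsupport f
      · have hux : 0 < uu n d x := lt_trans hm (hKm x hx)
        have h := div_identity n d p (((k:ℝ)+1)⁻¹) hε tf (fun y => Phi p (f y)) x
          (htf_ev x hx) hux (Phi' p (f x) • fderiv ℝ f x) (hφfd x)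
        rw [h, htf_eqK x hx]
        simp only [X1H, X2H, ContinuousLinearMap.smul_apply, smul_eq_mul, Real.rpow_one]
        ring
      · have hfx : f x = 0 := image_eq_zero_of_notMem_tsupport hx
        have h1 : X1H (fun y =>
            (ww n y + ((k:ℝ)+1)⁻¹ ^ 2) ^ ((p-2)/2) * aa n y * tf y ^ (1-p) * Phi p (f y)) x
            = 0 := X1H_zero_of_nmem (fun h => hx (hts_g1 h))
        have h2 : X2H (fun y =>
            (ww n y + ((k:ℝ)+1)⁻¹ ^ 2) ^ ((p-2)/2) * bb n y * tf y ^ (1-p) * Phi p (f y)) x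
            = 0 := X2H_zero_of_nmem (fun h => hx (hts_g2 h))
        rw [h1, h2, hφ_zero x hfx, hPhf_zero x hfx]
        ring
    -- integrability of the two pieces
    have hF1_cont : Continuous (fun x => (ww n x + ((k:ℝ)+1)⁻¹ ^ 2) ^ ((p-2)/2)
        * (ww n x) ^ (1:ℝ) * (tf x ^ (-p) * Phi p (f x))) :=
      (hA_cont.mul (cont_rpow_comp hww_cont 1 (fun x => Or.inr zero_le_one))).mul hr_cont
    have hF1_int : Integrable (fun x => (ww n x + ((k:ℝ)+1)⁻¹ ^ 2) ^ ((p-2)/2)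
        * (ww n x) ^ (1:ℝ) * (tf x ^ (-p) * Phi p (f x))) := by
      apply integrable_of_cont_support hKc hF1_cont
      intro x hx
      apply hr_supp
      simp only [Function.mem_support] at hx ⊢
      intro h0
      exact hx (by rw [h0, mul_zero])
    have hG1_cont : Continuous (fun x => (ww n x + ((k:ℝ)+1)⁻¹ ^ 2) ^ ((p-2)/2)
        * tf x ^ (1-p) * (Phi' p (f x) * (aa n x * X1H f x + bb n x * X2H f x))) :=
      (hA_cont.mul hT_cd.continuous).mul
        (hPhf_cont.mul ((haa_cd.continuous.mul hX1f).add (hbb_cd.continuous.mul hX2f)))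
    have hG1_int : Integrable (fun x => (ww n x + ((k:ℝ)+1)⁻¹ ^ 2) ^ ((p-2)/2)
        * tf x ^ (1-p) * (Phi' p (f x) * (aa n x * X1H f x + bb n x * X2H f x))) := by
      apply integrable_of_cont_support hKc hG1_cont
      intro x hx
      apply subset_tsupport f
      simp only [Function.mem_support] at hx ⊢
      intro h0
      exact hx (by rw [hPhf_zero x h0, zero_mul, mul_zero])
    have hzero : ∫ x, ((ww n x + ((k:ℝ)+1)⁻¹ ^ 2) ^ ((p-2)/2) * tf x ^ (1-p)
            * (Phi' p (f x) * (aa n x * X1H f x + bb n x * X2H f x))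
        - (p-1) * ((ww n x + ((k:ℝ)+1)⁻¹ ^ 2) ^ ((p-2)/2) * (ww n x) ^ (1:ℝ)
            * (tf x ^ (-p) * Phi p (f x)))) = 0 := by
      rw [show (fun x => (ww n x + ((k:ℝ)+1)⁻¹ ^ 2) ^ ((p-2)/2) * tf x ^ (1-p)
            * (Phi' p (f x) * (aa n x * X1H f x + bb n x * X2H f x))
        - (p-1) * ((ww n x + ((k:ℝ)+1)⁻¹ ^ 2) ^ ((p-2)/2) * (ww n x) ^ (1:ℝ)
            * (tf x ^ (-p) * Phi p (f x))))
        = fun x => X1H (fun y =>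
        (ww n y + ((k:ℝ)+1)⁻¹ ^ 2) ^ ((p-2)/2) * aa n y * tf y ^ (1-p) * Phi p (f y)) x
        + X2H (fun y =>
        (ww n y + ((k:ℝ)+1)⁻¹ ^ 2) ^ ((p-2)/2) * bb n y * tf y ^ (1-p) * Phi p (f y)) x
        from funext fun x => (hdiv x).symm]
      exact hIBP
    rw [integral_sub hG1_int (hF1_int.const_mul (p-1)), integral_const_mul] at hzero
    have claimA : (p-1) * (∫ x, (ww n x + ((k:ℝ)+1)⁻¹ ^ 2) ^ ((p-2)/2) * (ww n x) ^ (1:ℝ)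
            * (tf x ^ (-p) * Phi p (f x)))
        = ∫ x, (ww n x + ((k:ℝ)+1)⁻¹ ^ 2) ^ ((p-2)/2) * tf x ^ (1-p)
            * (Phi' p (f x) * (aa n x * X1H f x + bb n x * X2H f x)) := by linarith
    have hF2_cont : Continuous (fun x => (ww n x + ((k:ℝ)+1)⁻¹ ^ 2) ^ (((p-2)/2) * (p/(p-1)))
        * (ww n x) ^ ((p/(p-1))/2) * (tf x ^ (-p) * Phi p (f x))) :=
      ((cont_rpow_comp hbase_cd.continuous (((p-2)/2) * (p/(p-1)))
          (fun x => Or.inl (hbase_pos x).ne')).mul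
        (cont_rpow_comp hww_cont ((p/(p-1))/2) (fun x => Or.inr (by positivity)))).mul hr_cont
    have hF2_int : Integrable (fun x => (ww n x + ((k:ℝ)+1)⁻¹ ^ 2) ^ (((p-2)/2) * (p/(p-1)))
        * (ww n x) ^ ((p/(p-1))/2) * (tf x ^ (-p) * Phi p (f x))) := by
      apply integrable_of_cont_support hKc hF2_cont
      intro x hx
      apply hr_supp
      simp only [Function.mem_support] at hx ⊢
      intro h0
      exact hx (by rw [h0, mul_zero])
    have hL_cont : Continuous (fun x => ((X1H f x) ^ 2 + (X2H f x) ^ 2) ^ (p/2)) :=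
      cont_rpow_comp ((hX1f.pow 2).add (hX2f.pow 2)) (p/2) (fun x => Or.inr (by positivity))
    have hL_int : Integrable (fun x => ((X1H f x) ^ 2 + (X2H f x) ^ 2) ^ (p/2)) := by
      apply integrable_of_cont_support hKc hL_cont
      intro x hx
      by_contra hxf
      apply Function.mem_support.1 hx
      rw [X1H_zero_of_nmem hxf, X2H_zero_of_nmem hxf]
      norm_num
      exact Real.zero_rpow hp2
    have hpt : ∀ x, (ww n x + ((k:ℝ)+1)⁻¹ ^ 2) ^ ((p-2)/2) * tf x ^ (1-p)
            * (Phi' p (f x) * (aa n x * X1H f x + bb n x * X2H f x))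
        ≤ (((p-1)/p) ^ ((p-1)/p)) ^ (-p) * (((X1H f x) ^ 2 + (X2H f x) ^ 2) ^ (p/2))
          + (p-1) * ((p-1)/p) * ((ww n x + ((k:ℝ)+1)⁻¹ ^ 2) ^ (((p-2)/2) * (p/(p-1)))
            * (ww n x) ^ ((p/(p-1))/2) * (tf x ^ (-p) * Phi p (f x))) := by
      intro x
      have hZ : Phi' p (f x) * (aa n x * X1H f x + bb n x * X2H f x)
          ≤ p * |f x| ^ (p-1)
            * ((ww n x) ^ ((1:ℝ)/2) * ((X1H f x) ^ 2 + (X2H f x) ^ 2) ^ ((1:ℝ)/2)) := by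
        have h1 : Phi' p (f x) * (aa n x * X1H f x + bb n x * X2H f x)
            ≤ |Phi' p (f x)| * |aa n x * X1H f x + bb n x * X2H f x| := by
          rw [← abs_mul]; exact le_abs_self _
        have h2 := cs_aux (aa n x) (bb n x) (X1H f x) (X2H f x)
        have h3 : aa n x ^ 2 + bb n x ^ 2 = ww n x := rfl
        rw [h3] at h2
        rw [abs_Phi' hp] at h1
        calc Phi' p (f x) * (aa n x * X1H f x + bb n x * X2H f x)
            ≤ p * |f x| ^ (p-1) * |aa n x * X1H f x + bb n x * X2H f x| := h1
          _ ≤ p * |f x| ^ (p-1)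
              * ((ww n x) ^ ((1:ℝ)/2) * ((X1H f x) ^ 2 + (X2H f x) ^ 2) ^ ((1:ℝ)/2)) :=
            mul_le_mul_of_nonneg_left h2 (by positivity)
      have hres := pointwise_bound hp ((ww n x + ((k:ℝ)+1)⁻¹ ^ 2) ^ ((p-2)/2)) (tf x) (ww n x)
        ((X1H f x) ^ 2 + (X2H f x) ^ 2) |f x|
        (Phi' p (f x) * (aa n x * X1H f x + bb n x * X2H f x))
        (Real.rpow_nonneg (hbase_pos x).le _) (htf_pos x) (hww0 x) (by positivity)
        (abs_nonneg _) hZ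
      rw [← Real.rpow_mul (hbase_pos x).le] at hres
      have hphieq : |f x| ^ p = Phi p (f x) := rfl
      rw [hphieq] at hres
      exact hres
    have hint1 : Integrable (fun x => (((p-1)/p) ^ ((p-1)/p)) ^ (-p)
        * (((X1H f x) ^ 2 + (X2H f x) ^ 2) ^ (p/2))) :=
      hL_int.const_mul _
    have hint2 : Integrable (fun x => (p-1) * ((p-1)/p)
        * ((ww n x + ((k:ℝ)+1)⁻¹ ^ 2) ^ (((p-2)/2) * (p/(p-1)))
          * (ww n x) ^ ((p/(p-1))/2) * (tf x ^ (-p) * Phi p (f x)))) :=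
      hF2_int.const_mul _
    have claimB := integral_mono hG1_int (hint1.add hint2) hpt
    simp only [Pi.add_apply, integral_add hint1 hint2, integral_const_mul] at claimB
    rw [claimA]
    exact claimB
  -- limits as the regularization parameter goes to zero
  have hI_nonneg : 0 ≤ ∫ x, (ww n x) ^ (p/2) * (tf x ^ (-p) * Phi p (f x)) :=
    integral_nonneg (fun x => mul_nonneg (Real.rpow_nonneg (hww0 x) _) (hr0 x))
  have hlim1 : Tendsto (fun k : ℕ => ∫ x, (ww n x + ((k:ℝ)+1)⁻¹ ^ 2) ^ ((p-2)/2)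
      * (ww n x) ^ (1:ℝ) * (tf x ^ (-p) * Phi p (f x))) atTop
      (nhds (∫ x, (ww n x) ^ (p/2) * (tf x ^ (-p) * Phi p (f x)))) := by
    have h := dct_aux hKc (ww n) (fun x => tf x ^ (-p) * Phi p (f x)) hww_cont hww0
      hr_cont hr0 hr_supp ((p-2)/2) 1 one_pos (by rw [show (p-2)/2 + 1 = p/2 by ring]; positivity)
    rw [show (p-2)/2 + 1 = p/2 by ring] at h
    exact h
  have hexp2 : ((p-2)/2) * (p/(p-1)) + (p/(p-1))/2 = p/2 := by
    field_simp
    ring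
  have hlim2 : Tendsto (fun k : ℕ => ∫ x, (ww n x + ((k:ℝ)+1)⁻¹ ^ 2) ^ (((p-2)/2) * (p/(p-1)))
      * (ww n x) ^ ((p/(p-1))/2) * (tf x ^ (-p) * Phi p (f x))) atTop
      (nhds (∫ x, (ww n x) ^ (p/2) * (tf x ^ (-p) * Phi p (f x)))) := by
    have h := dct_aux hKc (ww n) (fun x => tf x ^ (-p) * Phi p (f x)) hww_cont hww0
      hr_cont hr0 hr_supp (((p-2)/2) * (p/(p-1))) ((p/(p-1))/2) (by positivity)
      (by rw [hexp2]; positivity)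
    rw [hexp2] at h
    exact h
  have hmain : (p-1) * (∫ x, (ww n x) ^ (p/2) * (tf x ^ (-p) * Phi p (f x)))
      ≤ (((p-1)/p) ^ ((p-1)/p)) ^ (-p) * (∫ x, ((X1H f x) ^ 2 + (X2H f x) ^ 2) ^ (p/2))
        + (p-1) * ((p-1)/p) * (∫ x, (ww n x) ^ (p/2) * (tf x ^ (-p) * Phi p (f x))) :=
    le_of_tendsto_of_tendsto' (hlim1.const_mul (p-1))
      (tendsto_const_nhds.add (hlim2.const_mul ((p-1) * ((p-1)/p)))) key
  -- final algebra
  have hr0' : (0:ℝ) < (p-1)/p := by positivity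
  have ht0pos : (0:ℝ) < ((p-1)/p) ^ ((p-1)/p) := Real.rpow_pos_of_pos hr0' _
  have h5 : (p-1)/p * (∫ x, (ww n x) ^ (p/2) * (tf x ^ (-p) * Phi p (f x)))
      ≤ (((p-1)/p) ^ ((p-1)/p)) ^ (-p) * (∫ x, ((X1H f x) ^ 2 + (X2H f x) ^ 2) ^ (p/2)) := by
    have he : (p-1) * (∫ x, (ww n x) ^ (p/2) * (tf x ^ (-p) * Phi p (f x)))
        - (p-1) * ((p-1)/p) * (∫ x, (ww n x) ^ (p/2) * (tf x ^ (-p) * Phi p (f x)))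
        = (p-1)/p * (∫ x, (ww n x) ^ (p/2) * (tf x ^ (-p) * Phi p (f x))) := by
      field_simp
      ring
    linarith
  have htp : (((p-1)/p) ^ ((p-1)/p)) ^ p * (((p-1)/p) ^ ((p-1)/p)) ^ (-p) = 1 := by
    rw [← Real.rpow_add ht0pos]
    simp
  have htpv : (((p-1)/p) ^ ((p-1)/p)) ^ p = ((p-1)/p) ^ (p-1) := by
    rw [← Real.rpow_mul hr0'.le]
    rw [show (p-1)/p * p = p - 1 by field_simp]
  have hfinal : ((p-1)/p) ^ p * (∫ x, (ww n x) ^ (p/2) * (tf x ^ (-p) * Phi p (f x)))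
      ≤ ∫ x, ((X1H f x) ^ 2 + (X2H f x) ^ 2) ^ (p/2) := by
    have h6 := mul_le_mul_of_nonneg_left h5 (le_of_lt (Real.rpow_pos_of_pos ht0pos p))
    rw [← mul_assoc, ← mul_assoc, htp, one_mul, htpv] at h6
    have he2 : ((p-1)/p) ^ (p-1) * ((p-1)/p) = ((p-1)/p) ^ p := by
      nth_rewrite 2 [show ((p-1)/p) = ((p-1)/p) ^ (1:ℝ) from (Real.rpow_one _).symm]
      rw [← Real.rpow_add hr0']
      rw [show p - 1 + 1 = p by ring]
    rw [← he2]
    exact h6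
  -- identify the set integrals
  have hLset : (∫ x in {x : Fin 3 → ℝ | x 0 * n 0 + x 1 * n 1 + x 2 * n 2 > d},
      ((X1H f x) ^ 2 + (X2H f x) ^ 2) ^ (p / 2))
      = ∫ x, ((X1H f x) ^ 2 + (X2H f x) ^ 2) ^ (p / 2) := by
    apply setIntegral_eq_integral_of_forall_compl_eq_zero
    intro x hx
    have hxf : x ∉ tsupport f := fun h => hx (hfs h)
    rw [X1H_zero_of_nmem hxf, X2H_zero_of_nmem hxf]
    norm_num
    exact Real.zero_rpow hp2
  have hRset : (∫ x in {x : Fin 3 → ℝ | x 0 * n 0 + x 1 * n 1 + x 2 * n 2 > d},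
      ((n 0 + 2 * x 1 * n 2) ^ 2 + (n 1 - 2 * x 0 * n 2) ^ 2) ^ (p / 2)
        / (x 0 * n 0 + x 1 * n 1 + x 2 * n 2 - d) ^ p * |f x| ^ p)
      = ∫ x, (ww n x) ^ (p/2) * (tf x ^ (-p) * Phi p (f x)) := by
    rw [setIntegral_eq_integral_of_forall_compl_eq_zero]
    · congr 1
      funext x
      by_cases hfx : f x = 0
      · rw [hfx]
        simp [Phi, Real.zero_rpow hp0.ne']
      · have hxK : x ∈ tsupport f := subset_tsupport f (Function.mem_support.2 hfx)
        have hux : 0 < uu n d x := lt_trans hm (hKm x hxK)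
        have e1 : (n 0 + 2 * x 1 * n 2) ^ 2 + (n 1 - 2 * x 0 * n 2) ^ 2 = ww n x := rfl
        have e2 : x 0 * n 0 + x 1 * n 1 + x 2 * n 2 - d = uu n d x := rfl
        have e3 : |f x| ^ p = Phi p (f x) := rfl
        rw [e1, e2, e3, htf_eqK x hxK, Real.rpow_neg hux.le]
        ring
    · intro x hx
      have hxf : x ∉ tsupport f := fun h => hx (hfs h)
      have hfx : f x = 0 := image_eq_zero_of_notMem_tsupport hxf
      rw [hfx, abs_zero, Real.zero_rpow hp0.ne', mul_zero]
  rw [ge_iff_le, hLset, hRset]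
  exact hfinal
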